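/- Consider the 2-way ε-filter automaton M with states {0,1,2}, initial and all-final, and transitions: from 0: (x:x)→0, (ε1:ε1)→1, (ε2:ε2)→2, (ε2:ε1)→0; from 1: (ε1:ε1)→1, (x:x)→0; from 2: (ε2:ε2)→2, (x:x)→0. Then M accepts exactly the words over {a,b,c,x} (with a=(ε1:ε1), b=(ε2:ε2), c=(ε2:ε1)) that avoid the factors ab, ba, ac, bc. -/

import Mathlib

/-- The 4-letter alphabet {a, b, c, x}. -/
inductive Ltr | a | b | c | x
deriving DecidableEq

/-- The forbidden two-letter factors: ab, ba, ac, bc. -/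
def forb : List (List Ltr) := [[.a, .b], [.b, .a], [.a, .c], [.b, .c]]

/-- `w` avoids all of ab, ba, ac, bc as factors. -/
def Avoids (w : List Ltr) : Prop := ∀ f ∈ forb, ¬ f <:+: w

/-- Moves on the 2-dimensional grid: a = (1,0), b = (0,1), c = (1,1), x = (1,1). -/
def mv : Ltr → ℕ × ℕ
  | .a => (1, 0)
  | .b => (0, 1)
  | .c => (1, 1)
  | .x => (1, 1)

/-- Total displacement of a word. -/
def disp (w : List Ltr) : ℕ × ℕ := (w.map mv).sum

/-- `w` is a word over {a,b,c} whose moves go from `(p,q)` to `(r,s)`. -/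
def Connects (p q r s : ℕ) (w : List Ltr) : Prop :=
  Ltr.x ∉ w ∧ p + (disp w).1 = r ∧ q + (disp w).2 = s

/-- The transition function of the 2-way ε-filter M, completed with a dead
state `none`. States 0, 1, 2 are `some 0`, `some 1`, `some 2`. With
a = (ε1:ε1), b = (ε2:ε2), c = (ε2:ε1), x = (x:x):
from 0: x→0, a→1, b→2, c→0; from 1: a→1, x→0; from 2: b→2, x→0. -/
def filtStep (q : Option (Fin 3)) (l : Ltr) : Option (Fin 3) :=
  match q with
  | none => none
  | some q =>
    if q = 0 then
      match l with
      | .a => some 1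
      | .b => some 2
      | .c => some 0
      | .x => some 0
    else if q = 1 then
      match l with
      | .a => some 1
      | .x => some 0
      | _ => none
    else
      match l with
      | .b => some 2
      | .x => some 0
      | _ => none

/-- The 2-way ε-filter automaton M: initial state 0, all (non-dead) states
final. -/
def filtM : DFA Ltr (Option (Fin 3)) :=
  ⟨filtStep, some 0, {q | q ≠ none}⟩

lemma avoids_nil : Avoids [] := by
  intro f hf h
  have h1 := h.length_le
  fin_cases hf <;> simp at h1

lemma singleton_prefix_iff (q : Ltr) (t : List Ltr) :
    [q] <+: t ↔ t.head? = some q := by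
  constructor
  · rintro ⟨s, rfl⟩; rfl
  · intro h
    cases t with
    | nil => simp at h
    | cons p s => simp at h; exact ⟨s, by simp [h]⟩

lemma avoids_cons (l : Ltr) (t : List Ltr) :
    Avoids (l :: t) ↔ Avoids t ∧ ∀ q, t.head? = some q → [l, q] ∉ forb := by
  constructor
  · intro h
    refine ⟨fun f hf hinf => h f hf (hinf.trans (t.suffix_cons l).isInfix), ?_⟩
    intro q hq hmem
    exact h [l, q] hmem (by
      refine List.IsPrefix.isInfix ?_
      rcases (singleton_prefix_iff q t).2 hq with ⟨s, rfl⟩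
      exact ⟨s, rfl⟩)
  · rintro ⟨h1, h2⟩ f hf hinf
    rcases List.infix_cons_iff.1 hinf with hpre | hinf'
    · have hlen : f.length = 2 := by fin_cases hf <;> rfl
      obtain ⟨p, q, rfl⟩ : ∃ p q, f = [p, q] := by
        match f, hlen with
        | [p, q], _ => exact ⟨p, q, rfl⟩
      rcases hpre with ⟨s, hs⟩
      simp only [List.cons_append] at hs
      injection hs with hp hs'
      subst hp
      have : t.head? = some q := by
        cases t with
        | nil => simp at hs'
        | cons r u => injection hs' with h3 _; simp [h3]
      exact h2 q this hf
    · exact h1 f hf hinf'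

lemma avoids_cons_ok {l : Ltr} (h : ∀ q, [l, q] ∉ forb) (t : List Ltr) :
    Avoids (l :: t) ↔ Avoids t := by
  rw [avoids_cons]
  exact ⟨fun h1 => h1.1, fun h1 => ⟨h1, fun q _ => h q⟩⟩

lemma not_avoids {l q : Ltr} (h : [l, q] ∈ forb) (t : List Ltr) :
    ¬ Avoids (l :: q :: t) := by
  intro ha
  exact ha [l, q] h ⟨[], t, rfl⟩

lemma avoids_cons_cons {l q : Ltr} (h : [l, q] ∉ forb) (t : List Ltr) :
    Avoids (l :: q :: t) ↔ Avoids (q :: t) := by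
  rw [avoids_cons]
  refine ⟨fun h1 => h1.1, fun h1 => ⟨h1, fun r hr => ?_⟩⟩
  injection hr with hr
  subst hr
  exact h

lemma avoids_singleton (l : Ltr) : Avoids [l] := by
  rw [avoids_cons]
  exact ⟨avoids_nil, by simp⟩

lemma eval_none (t : List Ltr) : filtM.evalFrom none t = none := by
  induction t with
  | nil => rfl
  | cons l t ih => exact ih

/-- Characterization of `evalFrom` from each live state. -/
lemma eval_char (w : List Ltr) :
    (filtM.evalFrom (some 0) w ≠ none ↔ Avoids w) ∧
    (filtM.evalFrom (some 1) w ≠ none ↔ Avoids (Ltr.a :: w)) ∧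
    (filtM.evalFrom (some 2) w ≠ none ↔ Avoids (Ltr.b :: w)) := by
  induction w with
  | nil =>
    refine ⟨?_, ?_, ?_⟩ <;>
      simp [DFA.evalFrom, avoids_nil, avoids_singleton]
  | cons l t ih =>
    obtain ⟨ih0, ih1, ih2⟩ := ih
    have step : ∀ (s : Option (Fin 3)),
        filtM.evalFrom s (l :: t) = filtM.evalFrom (filtStep s l) t := fun s => rfl
    refine ⟨?_, ?_, ?_⟩
    · rw [step]
      cases l with
      | a => simpa [filtStep] using ih1
      | b => simpa [filtStep] using ih2
      | c => rw [show filtStep (some 0) Ltr.c = some 0 from rfl, ih0,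
               avoids_cons_ok (by intro q; cases q <;> decide) t]
      | x => rw [show filtStep (some 0) Ltr.x = some 0 from rfl, ih0,
               avoids_cons_ok (by intro q; cases q <;> decide) t]
    · rw [step]
      cases l with
      | a => rw [show filtStep (some 1) Ltr.a = some 1 from rfl, ih1,
               avoids_cons_cons (by decide) t]
      | b => rw [show filtStep (some 1) Ltr.b = none from rfl]
             simp only [eval_none, ne_eq, not_true_eq_false, false_iff]
             exact not_avoids (by decide) t
      | c => rw [show filtStep (some 1) Ltr.c = none from rfl]
             simp only [eval_none, ne_eq, not_true_eq_false, false_iff]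
             exact not_avoids (by decide) t
      | x => rw [show filtStep (some 1) Ltr.x = some 0 from rfl, ih0,
               avoids_cons_cons (by decide) t,
               avoids_cons_ok (by intro q; cases q <;> decide) t]
    · rw [step]
      cases l with
      | b => rw [show filtStep (some 2) Ltr.b = some 2 from rfl, ih2,
               avoids_cons_cons (by decide) t]
      | a => rw [show filtStep (some 2) Ltr.a = none from rfl]
             simp only [eval_none, ne_eq, not_true_eq_false, false_iff]
             exact not_avoids (by decide) t
      | c => rw [show filtStep (some 2) Ltr.c = none from rfl]
             simp only [eval_none, ne_eq, not_true_eq_false, false_iff]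
             exact not_avoids (by decide) t
      | x => rw [show filtStep (some 2) Ltr.x = some 0 from rfl, ih0,
               avoids_cons_cons (by decide) t,
               avoids_cons_ok (by intro q; cases q <;> decide) t]

/-- The filter M accepts exactly the words over {a,b,c,x} avoiding the factors
ab, ba, ac, bc. -/
theorem filter_accepts_iff_avoids :
    ∀ w : List Ltr, w ∈ filtM.accepts ↔ Avoids w := by
  intro w
  have h := (eval_char w).1
  exact h
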